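/- For n ≥ 3, the rank of the semigroup OCP_n of order-preserving partial contraction mappings on [n] is exactly 2n. -/

import Mathlib

/-- Partial transformations on the chain with `n` elements. -/
abbrev PT (n : ℕ) := Fin n → Option (Fin n)

/-- Left-to-right composition of partial transformations: `x(f*g) = g(f(x))`. -/
instance PT.instMul (n : ℕ) : Mul (PT n) := ⟨fun f g x => (f x).bind g⟩

instance PT.instSemigroup (n : ℕ) : Semigroup (PT n) where
  mul_assoc f g h := funext fun x => by
    show ((f x).bind g).bind h = (f x).bind (fun y => (g y).bind h)
    cases f x <;> rfl

/-- Domain of a partial transformation. -/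
def dom {n : ℕ} (f : PT n) : Set (Fin n) := {x | (f x).isSome}

/-- Image of a partial transformation. -/
def im {n : ℕ} (f : PT n) : Set (Fin n) := {y | ∃ x, f x = some y}

/-- `f` is a contraction: `|f x - f y| ≤ |x - y|` on its domain. -/
def IsContraction {n : ℕ} (f : PT n) : Prop :=
  ∀ x y a b, f x = some a → f y = some b → Nat.dist a.val b.val ≤ Nat.dist x.val y.val

/-- `f` is order-preserving on its domain. -/
def IsOP {n : ℕ} (f : PT n) : Prop :=
  ∀ x y a b, f x = some a → f y = some b → x ≤ y → a ≤ b

/-- `f` is order-reversing on its domain. -/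
def IsOR {n : ℕ} (f : PT n) : Prop :=
  ∀ x y a b, f x = some a → f y = some b → x ≤ y → b ≤ a

section Aux
variable {n : ℕ}

lemma PT.mul_apply (f g : PT n) (x : Fin n) : (f * g) x = (f x).bind g := rfl

/-- The set OCP_n. -/
def OCPs (n : ℕ) : Set (PT n) := {f : PT n | IsOP f ∧ IsContraction f}

/-- The identity. -/
def idPT (n : ℕ) : PT n := fun x => some x

/-- partial identity with domain missing `i`. -/
def pid {n : ℕ} (i : Fin n) : PT n := fun x => if x = i then none else some x

/-- total map from an ℕ-function. -/
def tot (n : ℕ) (F : ℕ → ℕ) : PT n := fun x => if h : F x.val < n then some ⟨F x.val, h⟩ else none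

/-- the function of the `q`-th total generator. -/
def tfun (n q : ℕ) : ℕ → ℕ := fun x =>
  if q = n - 1 then min (x+1) (n-1) else if q = n - 2 then x else if x ≤ q then x else x - 1

/-- the "collapse at v" function. -/
def dfun (v : ℕ) : ℕ → ℕ := fun x => if x ≤ v then x else x - 1

/-- The generators. -/
def genF (n : ℕ) : Fin n ⊕ Fin n → PT n :=
  Sum.elim (fun i => pid i) (fun q => tot n (tfun n q.val))

def genA (n : ℕ) : Set (PT n) := Set.range (genF n)

lemma tot_apply_eq (F : ℕ → ℕ) (x : Fin n) (h : F x.val < n) :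
    tot n F x = some ⟨F x.val, h⟩ := by simp [tot, h]

lemma tot_mul (F G : ℕ → ℕ) (hF : ∀ x < n, F x < n) :
    tot n F * tot n G = tot n (fun x => G (F x)) := by
  funext x
  show (tot n F x).bind (tot n G) = _
  have h : F x.val < n := hF _ x.isLt
  simp [tot, h]

lemma tot_congr {F G : ℕ → ℕ} (h : ∀ x < n, F x = G x) : tot n F = tot n G := by
  funext x
  simp [tot, h x.val x.isLt]

lemma tot_total (F : ℕ → ℕ) (hF : ∀ x < n, F x < n) (x : Fin n) : (tot n F x).isSome := by
  simp [tot, hF _ x.isLt]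

/-- iterated step bounds -/
lemma iter_step {F : ℕ → ℕ} (hs : ∀ x, x + 1 < n → F x ≤ F (x+1) ∧ F (x+1) ≤ F x + 1) :
    ∀ d x, x + d < n → F x ≤ F (x + d) ∧ F (x + d) ≤ F x + d := by
  intro d
  induction d with
  | zero => intro x _; simpa using ⟨le_refl _, le_refl _⟩
  | succ d ih =>
    intro x hx
    have h1 := ih x (by omega)
    have h2 := hs (x + d) (by omega)
    have : x + (d+1) = (x+d)+1 := by omega
    rw [this]
    omega

lemma iter_step' {F : ℕ → ℕ} (hs : ∀ x, x + 1 < n → F x ≤ F (x+1) ∧ F (x+1) ≤ F x + 1)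
    {x y : ℕ} (hxy : x ≤ y) (hy : y < n) : F x ≤ F y ∧ F y ≤ F x + (y - x) := by
  have h := iter_step hs (y - x) x (by omega)
  rw [show x + (y - x) = y from by omega] at h
  exact h

lemma tot_mem_OCP (F : ℕ → ℕ) (hF : ∀ x < n, F x < n)
    (hs : ∀ x, x + 1 < n → F x ≤ F (x+1) ∧ F (x+1) ≤ F x + 1) : tot n F ∈ OCPs n := by
  constructor
  · intro x y a b hx hy hxy
    rw [tot_apply_eq F x (hF _ x.isLt)] at hx
    rw [tot_apply_eq F y (hF _ y.isLt)] at hy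
    obtain rfl := Option.some_inj.mp hx
    obtain rfl := Option.some_inj.mp hy
    have hxy' : x.val ≤ y.val := hxy
    have h := iter_step' hs hxy' y.isLt
    exact h.1
  · intro x y a b hx hy
    rw [tot_apply_eq F x (hF _ x.isLt)] at hx
    rw [tot_apply_eq F y (hF _ y.isLt)] at hy
    obtain rfl := Option.some_inj.mp hx
    obtain rfl := Option.some_inj.mp hy
    show Nat.dist (F x.val) (F y.val) ≤ _
    rcases le_total x.val y.val with hle | hle
    · have h := iter_step' hs hle y.isLt
      simp only [Nat.dist]; omega
    · have h := iter_step' hs hle x.isLt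
      simp only [Nat.dist]; omega

end Aux
section C2
variable {n : ℕ}

lemma tfun_lt (q : ℕ) : ∀ x < n, tfun n q x < n := by
  intro x hx; simp only [tfun]; split_ifs <;> omega

lemma tfun_step (q : ℕ) : ∀ x, x + 1 < n → tfun n q x ≤ tfun n q (x+1) ∧ tfun n q (x+1) ≤ tfun n q x + 1 := by
  intro x hx; simp only [tfun]; split_ifs <;> omega

lemma dfun_lt (v : ℕ) : ∀ x < n, dfun v x < n := by
  intro x hx; simp only [dfun]; split_ifs <;> omega

lemma dfun_step (v : ℕ) : ∀ x, x + 1 < n → dfun v x ≤ dfun v (x+1) ∧ dfun v (x+1) ≤ dfun v x + 1 := by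
  intro x hx; simp only [dfun]; split_ifs <;> omega

lemma pid_mem_OCP (i : Fin n) : pid i ∈ OCPs n := by
  constructor
  · intro x y a b hx hy hxy
    simp only [pid] at hx hy
    split_ifs at hx hy
    obtain rfl := Option.some_inj.mp hx
    obtain rfl := Option.some_inj.mp hy
    exact hxy
  · intro x y a b hx hy
    simp only [pid] at hx hy
    split_ifs at hx hy
    obtain rfl := Option.some_inj.mp hx
    obtain rfl := Option.some_inj.mp hy
    exact le_refl _

lemma genA_sub_OCP : genA n ⊆ OCPs n := by
  rintro f ⟨j, rfl⟩
  rcases j with i | q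
  · exact pid_mem_OCP i
  · exact tot_mem_OCP _ (tfun_lt q.val) (tfun_step q.val)

/-- OCP as a subsemigroup. -/
def OCPsub (n : ℕ) : Subsemigroup (PT n) where
  carrier := OCPs n
  mul_mem' := by
    rintro f g ⟨hfo, hfc⟩ ⟨hgo, hgc⟩
    constructor
    · intro x y a b hx hy hxy
      rw [PT.mul_apply] at hx hy
      rcases hfx : f x with _ | u <;> rw [hfx] at hx
      · exact absurd hx (by simp)
      rcases hfy : f y with _ | v <;> rw [hfy] at hy
      · exact absurd hy (by simp)
      simp only [Option.bind_some] at hx hy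
      exact hgo u v a b hx hy (hfo x y u v hfx hfy hxy)
    · intro x y a b hx hy
      rw [PT.mul_apply] at hx hy
      rcases hfx : f x with _ | u <;> rw [hfx] at hx
      · exact absurd hx (by simp)
      rcases hfy : f y with _ | v <;> rw [hfy] at hy
      · exact absurd hy (by simp)
      simp only [Option.bind_some] at hx hy
      exact le_trans (hgc u v a b hx hy) (hfc x y u v hfx hfy)

lemma closure_le_OCP : (Subsemigroup.closure (genA n) : Set (PT n)) ⊆ OCPs n := by
  have : Subsemigroup.closure (genA n) ≤ OCPsub n :=
    Subsemigroup.closure_le.mpr genA_sub_OCP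
  exact this

end C2
section C3
variable {n : ℕ}

lemma dfun_mem_closure (hn : 3 ≤ n) {v : ℕ} (hv : v ≤ n - 2) :
    tot n (dfun v) ∈ Subsemigroup.closure (genA n) := by
  by_cases hv3 : v ≤ n - 3
  · apply Subsemigroup.subset_closure
    refine ⟨Sum.inr ⟨v, by omega⟩, ?_⟩
    show tot n (tfun n v) = tot n (dfun v)
    apply tot_congr; intro x hx
    simp only [tfun, dfun]; split_ifs <;> omega
  · have hv2 : v = n - 2 := by omega
    subst hv2
    have hdec : tot n (dfun (n-2)) = tot n (tfun n (n-1)) * tot n (tfun n 0) := by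
      rw [tot_mul _ _ (tfun_lt (n-1))]
      apply tot_congr; intro x hx
      simp only [tfun, dfun, if_pos rfl, if_true]
      split_ifs <;> omega
    rw [hdec]
    exact mul_mem (Subsemigroup.subset_closure ⟨Sum.inr ⟨n-1, by omega⟩, rfl⟩)
      (Subsemigroup.subset_closure ⟨Sum.inr ⟨0, by omega⟩, rfl⟩)

lemma T0 (hn : 3 ≤ n) : ∀ k (F : ℕ → ℕ), (∀ x < n, F x < n) →
    (∀ x, x + 1 < n → F x ≤ F (x+1) ∧ F (x+1) ≤ F x + 1) → F 0 = 0 →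
    n * n - (∑ x ∈ Finset.range n, F x) ≤ k →
    tot n F ∈ Subsemigroup.closure (genA n) := by
  intro k
  induction k with
  | zero =>
    intro F hb hs h0 hm
    exfalso
    have h1 : ∑ x ∈ Finset.range n, F x ≤ ∑ _x ∈ Finset.range n, (n-1) :=
      Finset.sum_le_sum fun i hi => by have := hb i (Finset.mem_range.mp hi); omega
    rw [Finset.sum_const, Finset.card_range, smul_eq_mul] at h1
    have h2 : n * (n - 1) < n * n :=
      mul_lt_mul_of_pos_left (by omega) (by omega)
    omega
  | succ k ih =>
    intro F hb hs h0 hm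
    by_cases hpl : ∃ z, z + 1 < n ∧ F z = F (z+1)
    · obtain ⟨z, hz, hpz⟩ := hpl
      have hFle : ∀ x < n, F x ≤ x := fun x hx => by
        have := iter_step' hs (Nat.zero_le x) hx; omega
      set F₂ : ℕ → ℕ := fun y => if y ≤ z then F y else F y + 1 with hF₂
      have hb₂ : ∀ x < n, F₂ x < n := by
        intro x hx; simp only [hF₂]; split_ifs with h
        · exact hb x hx
        · have h1 := iter_step' hs (show z+1 ≤ x by omega) hx
          have h2 := hFle z (by omega)
          omega
      have hs₂ : ∀ x, x + 1 < n → F₂ x ≤ F₂ (x+1) ∧ F₂ (x+1) ≤ F₂ x + 1 := by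
        intro x hx
        by_cases h1 : x + 1 ≤ z
        · simp only [hF₂, if_pos (show x ≤ z by omega), if_pos h1]; exact hs x hx
        · by_cases h2 : x ≤ z
          · obtain rfl : x = z := by omega
            simp only [hF₂, if_pos h2, if_neg h1]; omega
          · simp only [hF₂, if_neg h2, if_neg (show ¬ x + 1 ≤ z by omega)]
            have := hs x hx; omega
      have h0₂ : F₂ 0 = 0 := by simp only [hF₂, if_pos (Nat.zero_le z)]; exact h0
      have hsum : ∑ x ∈ Finset.range n, F x < ∑ x ∈ Finset.range n, F₂ x := by
        apply Finset.sum_lt_sum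
        · intro i _; simp only [hF₂]; split_ifs <;> omega
        · refine ⟨n-1, Finset.mem_range.mpr (by omega), ?_⟩
          simp only [hF₂, if_neg (show ¬ n - 1 ≤ z by omega)]; omega
      have hmeas : n * n - (∑ x ∈ Finset.range n, F₂ x) ≤ k := by omega
      have hvz : F z ≤ n - 2 := by have := hFle z (by omega); omega
      have hdec : tot n F = tot n F₂ * tot n (dfun (F z)) := by
        rw [tot_mul _ _ hb₂]
        apply tot_congr; intro x hx
        by_cases hxz : x ≤ z
        · have h1 : F x ≤ F z := (iter_step' hs hxz (by omega)).1
          simp only [hF₂, dfun, if_pos hxz, if_pos h1]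
        · have h1 : F z ≤ F x := (iter_step' hs (show z ≤ x by omega) hx).1
          simp only [hF₂, dfun, if_neg hxz, if_neg (show ¬ F x + 1 ≤ F z by omega)]
          omega
      rw [hdec]
      exact mul_mem (ih F₂ hb₂ hs₂ h0₂ hmeas) (dfun_mem_closure hn hvz)
    · have hid : ∀ x, x < n → F x = x := by
        intro x
        induction x with
        | zero => intro _; exact h0
        | succ x ihx =>
          intro hx
          have h1 := ihx (by omega)
          have h2 := hs x (by omega)
          have h3 : F (x+1) ≠ F x := fun hc => hpl ⟨x, by omega, hc.symm⟩
          omega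
      have heq : tot n F = genF n (Sum.inr ⟨n-2, by omega⟩) := by
        show tot n F = tot n (tfun n (n-2))
        apply tot_congr; intro x hx
        simp only [tfun, if_neg (show ¬ n - 2 = n - 1 by omega), if_pos rfl, if_true]
        exact hid x hx
      rw [heq]
      exact Subsemigroup.subset_closure ⟨_, rfl⟩

lemma tot_mem_closure (hn : 3 ≤ n) (F : ℕ → ℕ) (hb : ∀ x < n, F x < n)
    (hs : ∀ x, x + 1 < n → F x ≤ F (x+1) ∧ F (x+1) ≤ F x + 1) :
    tot n F ∈ Subsemigroup.closure (genA n) := by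
  suffices H : ∀ c (F : ℕ → ℕ), (∀ x < n, F x < n) →
      (∀ x, x + 1 < n → F x ≤ F (x+1) ∧ F (x+1) ≤ F x + 1) → F 0 = c →
      tot n F ∈ Subsemigroup.closure (genA n) from H (F 0) F hb hs rfl
  intro c
  induction c with
  | zero => intro F hb hs h0; exact T0 hn _ F hb hs h0 le_rfl
  | succ c ihc =>
    intro F hb hs h0
    have hpos : ∀ x < n, 1 ≤ F x := fun x hx => by
      have := (iter_step' hs (Nat.zero_le x) hx).1; omega
    set F' : ℕ → ℕ := fun x => F x - 1 with hF'
    have hb' : ∀ x < n, F' x < n := fun x hx => by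
      have := hb x hx; simp only [hF']; omega
    have hs' : ∀ x, x + 1 < n → F' x ≤ F' (x+1) ∧ F' (x+1) ≤ F' x + 1 := by
      intro x hx
      have := hs x hx; have := hpos x (by omega); have := hpos (x+1) hx
      simp only [hF']; omega
    have h0' : F' 0 = c := by simp only [hF']; omega
    have hdec : tot n F = tot n F' * tot n (tfun n (n-1)) := by
      rw [tot_mul _ _ hb']
      apply tot_congr; intro x hx
      have h1 := hpos x hx; have h2 := hb x hx
      simp only [hF', tfun, if_pos rfl, if_true]
      omega
    rw [hdec]
    exact mul_mem (ihc F' hb' hs' h0')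
      (Subsemigroup.subset_closure ⟨Sum.inr ⟨n-1, by omega⟩, rfl⟩)

end C3
section C4
variable {n : ℕ}

/-- restriction: identity off `S`. -/
def rS (S : Finset (Fin n)) : PT n := fun x => if x ∈ S then none else some x

lemma rS_singleton (a : Fin n) : rS {a} = pid a := by
  funext x; simp [rS, pid, Finset.mem_singleton]

lemma rS_cons (a : Fin n) (s : Finset (Fin n)) (h : a ∉ s) :
    rS (Finset.cons a s h) = pid a * rS s := by
  funext x
  show _ = (pid a x).bind (rS s)
  by_cases hxa : x = a
  · subst hxa; simp [rS, pid, Finset.mem_cons]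
  · simp [rS, pid, hxa, Finset.mem_cons]

lemma rS_mem_closure {S : Finset (Fin n)} (hS : S.Nonempty) :
    rS S ∈ Subsemigroup.closure (genA n) := by
  induction hS using Finset.Nonempty.cons_induction with
  | singleton a =>
    rw [rS_singleton]
    exact Subsemigroup.subset_closure ⟨Sum.inl a, rfl⟩
  | cons a s h hs ih =>
    rw [rS_cons]
    exact mul_mem (Subsemigroup.subset_closure ⟨Sum.inl a, rfl⟩) ih

/-- the canonical total extension of a partial map. -/
def extF (f : PT n) : ℕ → ℕ := fun x =>
  (Finset.univ.filter fun d : Fin n => (f d).isSome).sup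
    fun d => (((f d).map Fin.val).getD 0) - (d.val - x)

lemma extF_lt (hn : 3 ≤ n) (f : PT n) : ∀ x < n, extF f x < n := by
  intro x _
  apply (Finset.sup_lt_iff (show (⊥ : ℕ) < n by simp; omega)).mpr
  intro d hd
  rw [Finset.mem_filter] at hd
  obtain ⟨a, ha⟩ := Option.isSome_iff_exists.mp hd.2
  rw [ha]
  simp only [Option.map_some, Option.getD_some]
  have := a.isLt; omega

lemma extF_step (f : PT n) :
    ∀ x, x + 1 < n → extF f x ≤ extF f (x+1) ∧ extF f (x+1) ≤ extF f x + 1 := by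
  intro x _
  constructor
  · apply Finset.sup_le
    intro d hd
    have h0 : (((f d).map Fin.val).getD 0) - (d.val - (x+1)) ≤ extF f (x+1) :=
      Finset.le_sup (f := fun d : Fin n => (((f d).map Fin.val).getD 0) - (d.val - (x+1))) hd
    exact le_trans (by omega) h0
  · apply Finset.sup_le
    intro d hd
    have h0 : (((f d).map Fin.val).getD 0) - (d.val - x) ≤ extF f x :=
      Finset.le_sup (f := fun d : Fin n => (((f d).map Fin.val).getD 0) - (d.val - x)) hd
    omega

lemma extF_ext {f : PT n} (hop : IsOP f) (hc : IsContraction f)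
    {x : Fin n} {a : Fin n} (hx : f x = some a) : extF f x.val = a.val := by
  apply le_antisymm
  · apply Finset.sup_le
    intro d hd
    rw [Finset.mem_filter] at hd
    obtain ⟨b, hb⟩ := Option.isSome_iff_exists.mp hd.2
    rw [hb]
    simp only [Option.map_some, Option.getD_some]
    rcases le_or_gt d.val x.val with hle | hlt
    · have h1 : b ≤ a := hop d x b a hb hx (Fin.le_def.mpr hle)
      have h2 : b.val ≤ a.val := h1
      omega
    · have h1 : a ≤ b := hop x d a b hx hb (Fin.le_def.mpr (le_of_lt hlt))
      have h2 : a.val ≤ b.val := h1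
      have h3 := hc d x b a hb hx
      simp only [Nat.dist] at h3
      omega
  · have hmem : x ∈ Finset.univ.filter fun d : Fin n => (f d).isSome :=
      Finset.mem_filter.mpr ⟨Finset.mem_univ _, by rw [hx]; rfl⟩
    have := Finset.le_sup (f := fun d : Fin n =>
      (((f d).map Fin.val).getD 0) - (d.val - x.val)) hmem
    simpa [hx, extF] using this

lemma OCP_sub_closure (hn : 3 ≤ n) :
    OCPs n ⊆ (Subsemigroup.closure (genA n) : Set (PT n)) := by
  rintro f ⟨hop, hc⟩
  have hb := extF_lt hn f
  have hs := extF_step f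
  by_cases htot : ∀ x, (f x).isSome
  · have heq : f = tot n (extF f) := by
      funext x
      obtain ⟨a, ha⟩ := Option.isSome_iff_exists.mp (htot x)
      rw [ha, tot_apply_eq _ _ (hb _ x.isLt)]
      exact congrArg some (Fin.ext (extF_ext hop hc ha).symm)
    rw [heq]
    exact tot_mem_closure hn _ hb hs
  · push_neg at htot
    obtain ⟨x₀, hx₀⟩ := htot
    set M := Finset.univ.filter (fun x : Fin n => f x = none) with hM
    have hMne : M.Nonempty :=
      ⟨x₀, Finset.mem_filter.mpr ⟨Finset.mem_univ _, Option.not_isSome_iff_eq_none.mp hx₀⟩⟩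
    have hdec : f = rS M * tot n (extF f) := by
      funext x
      show f x = (rS M x).bind (tot n (extF f))
      by_cases hx : f x = none
      · have hxM : x ∈ M := Finset.mem_filter.mpr ⟨Finset.mem_univ _, hx⟩
        simp [rS, hxM, hx]
      · obtain ⟨a, ha⟩ := Option.ne_none_iff_exists'.mp hx
        have hxM : x ∉ M := by
          rw [hM, Finset.mem_filter]; tauto
        rw [ha]
        simp only [rS, if_neg hxM, Option.bind_some]
        rw [tot_apply_eq _ _ (hb _ x.isLt)]
        exact congrArg some (Fin.ext (extF_ext hop hc ha)).symm
    rw [hdec]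
    exact mul_mem (rS_mem_closure hMne) (tot_mem_closure hn _ hb hs)

lemma closure_genA (hn : 3 ≤ n) :
    (Subsemigroup.closure (genA n) : Set (PT n)) = OCPs n :=
  Set.Subset.antisymm closure_le_OCP (OCP_sub_closure hn)

end C4
section C5
variable {n : ℕ}

lemma tfun_inj (hn : 3 ≤ n) {q q' : ℕ} (hq : q < n) (hq' : q' < n)
    (h : ∀ x < n, tfun n q x = tfun n q' x) : q = q' := by
  by_contra hne
  have h1 := h 0 (by omega)
  have h2 := h (min q q' + 1) (by omega)
  simp only [tfun] at h1 h2
  split_ifs at h1 h2 <;> omega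

lemma genF_injective (hn : 3 ≤ n) : Function.Injective (genF n) := by
  rintro (i | q) (i' | q') h
  · by_cases hii : i = i'
    · rw [hii]
    · have := congrFun h i
      simp only [genF, Sum.elim_inl, pid, if_pos rfl, if_neg hii] at this
      exact absurd this (by simp)
  · exfalso
    have := congrFun h i
    simp only [genF, Sum.elim_inl, Sum.elim_inr, pid, if_pos rfl] at this
    rw [tot_apply_eq _ _ (tfun_lt q'.val _ i.isLt)] at this
    exact absurd this (by simp)
  · exfalso
    have := congrFun h i'
    simp only [genF, Sum.elim_inl, Sum.elim_inr, pid, if_pos rfl] at this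
    rw [tot_apply_eq _ _ (tfun_lt q.val _ i'.isLt)] at this
    exact absurd this (by simp)
  · have hv : ∀ x < n, tfun n q.val x = tfun n q'.val x := by
      intro x hx
      have := congrFun h ⟨x, hx⟩
      simp only [genF, Sum.elim_inr] at this
      rw [tot_apply_eq _ _ (tfun_lt q.val _ hx), tot_apply_eq _ _ (tfun_lt q'.val _ hx)] at this
      exact Fin.mk.injEq _ _ _ _ ▸ (Option.some_inj.mp this)
    exact congrArg Sum.inr (Fin.ext (tfun_inj hn q.isLt q'.isLt hv))

lemma ncard_genA (hn : 3 ≤ n) : (genA n).ncard = 2 * n := by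
  rw [genA, ← Set.image_univ, Set.ncard_image_of_injective _ (genF_injective hn),
    Set.ncard_univ, Nat.card_sum]
  simp [Nat.card_eq_fintype_card]
  omega

end C5
section C6
variable {n : ℕ}

/-- total defect-one maps with plateau exactly at `q`. -/
def Cq (n q : ℕ) : Set (PT n) :=
  {f | (∀ x, (f x).isSome) ∧
    ∀ (x : ℕ) (hx : x + 1 < n), (f ⟨x, Nat.lt_of_succ_lt hx⟩ = f ⟨x+1, hx⟩ ↔ x = q)}

/-- injective maps with domain exactly the complement of `i`. -/
def Ki (i : Fin n) : Set (PT n) :=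
  {f | f i = none ∧ (∀ j, j ≠ i → (f j).isSome) ∧
    ∀ x y a, f x = some a → f y = some a → x = y}

def cls (n : ℕ) : Fin n ⊕ Fin n → Set (PT n) :=
  Sum.elim (fun i => Ki i) (fun q => if q.val = n - 1 then {idPT n} else Cq n q.val)

lemma total_inj_eq_id {g : PT n} (hg : g ∈ OCPs n) (htot : ∀ x, (g x).isSome)
    (hinj : ∀ x y a, g x = some a → g y = some a → x = y) : g = idPT n := by
  obtain ⟨hop, _hc⟩ := hg
  set G : Fin n → Fin n := fun x => (g x).get (htot x) with hG
  have hGs : ∀ x, g x = some (G x) := fun x => (Option.some_get (htot x)).symm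
  set Gv : ℕ → ℕ := fun x => if h : x < n then (G ⟨x, h⟩).val else 0 with hGv
  have hGve : ∀ (x : ℕ) (h : x < n), Gv x = (G ⟨x, h⟩).val := fun x h => dif_pos h
  have hstep : ∀ x, x + 1 < n → Gv x < Gv (x+1) := by
    intro x hx
    rw [hGve x (by omega), hGve (x+1) hx]
    have hle : G ⟨x, by omega⟩ ≤ G ⟨x+1, hx⟩ :=
      hop _ _ _ _ (hGs _) (hGs _) (by rw [Fin.le_def]; simp)
    have hne : G ⟨x, by omega⟩ ≠ G ⟨x+1, hx⟩ := by
      intro hcq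
      have := hinj ⟨x, by omega⟩ ⟨x+1, hx⟩ _ (hGs _) (by rw [hGs, hcq])
      rw [Fin.mk.injEq] at this
      omega
    rcases lt_or_eq_of_le (Fin.le_def.mp hle) with h | h
    · exact h
    · exact absurd (Fin.ext h) hne
  have hiter : ∀ d x, x + d < n → Gv x + d ≤ Gv (x + d) := by
    intro d
    induction d with
    | zero => intro x _; simp
    | succ d ih =>
      intro x hx
      have h1 := ih x (by omega)
      have h2 := hstep (x + d) (by omega)
      have h3 : x + (d + 1) = (x + d) + 1 := by omega
      rw [h3]
      omega
  have hub : ∀ x < n, Gv x < n := by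
    intro x hx
    rw [hGve x hx]
    exact (G ⟨x, hx⟩).isLt
  have hval : ∀ x, x < n → Gv x = x := by
    intro x hx
    have h1 := hiter x 0 (by omega)
    have h2 := hiter (n - 1 - x) x (by omega)
    have h3 := hub (x + (n - 1 - x)) (by omega)
    rw [show (0:ℕ) + x = x from by omega] at h1
    omega
  funext x
  rw [hGs x]
  refine congrArg some (Fin.ext ?_)
  have := hval x.val x.isLt
  rw [hGve x.val x.isLt] at this
  simpa using this
end C6
section C7
variable {n : ℕ}

lemma id_mul (h : PT n) : idPT n * h = h := by
  funext x; show (some x).bind h = h x; rfl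

lemma inj_of_no_plateau {g : PT n} (hg : g ∈ OCPs n) (htot : ∀ x, (g x).isSome)
    (hnp : ∀ (x : ℕ) (hx : x + 1 < n), g ⟨x, Nat.lt_of_succ_lt hx⟩ ≠ g ⟨x+1, hx⟩) :
    ∀ x y a, g x = some a → g y = some a → x = y := by
  have key : ∀ x y : Fin n, x < y → ∀ a, g x = some a → g y = some a → False := by
    intro x y hlt a hx hy
    have hvlt : x.val < y.val := hlt
    have hx1 : x.val + 1 < n := by have := y.isLt; omega
    obtain ⟨b, hb⟩ := Option.isSome_iff_exists.mp (htot ⟨x.val+1, hx1⟩)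
    have h1 : a ≤ b := hg.1 x ⟨x.val+1, hx1⟩ a b hx hb (by rw [Fin.le_def]; simp)
    have h2 : b ≤ a := hg.1 ⟨x.val+1, hx1⟩ y b a hb hy (by rw [Fin.le_def]; simp; omega)
    have hba : b = a := le_antisymm h2 h1
    refine hnp x.val hx1 ?_
    rw [Fin.eta, hx, hb, hba]
  intro x y a hx hy
  rcases lt_trichotomy x y with hlt | heq | hlt
  · exact absurd (key x y hlt a hx hy) (by simp)
  · exact heq
  · exact absurd (key y x hlt a hy hx) (by simp)

lemma factor_id {g h : PT n} (hg : g ∈ OCPs n) (hmul : g * h = idPT n) : g = idPT n := by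
  have happ : ∀ x, (g x).bind h = some x := fun x => congrFun hmul x
  have htot : ∀ x, (g x).isSome := by
    intro x
    rcases hgx : g x with _ | a
    · exfalso
      have h1 := happ x
      rw [hgx] at h1
      exact absurd h1 (by simp)
    · rfl
  have hinj : ∀ x y a, g x = some a → g y = some a → x = y := by
    intro x y a hx hy
    have h1 := happ x
    have h2 := happ y
    rw [hx] at h1; rw [hy] at h2
    simp only [Option.bind_some] at h1 h2
    rw [h1] at h2
    exact Option.some_inj.mp h2
  exact total_inj_eq_id hg htot hinj

lemma factor_Cq {q : ℕ} {f g h : PT n} (hf : f ∈ Cq n q) (hg : g ∈ OCPs n)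
    (hmul : g * h = f) : g ∈ Cq n q ∨ h = f := by
  have happ : ∀ x, (g x).bind h = f x := fun x => congrFun hmul x
  have htot : ∀ x, (g x).isSome := by
    intro x
    rcases hgx : g x with _ | a
    · exfalso
      have h2 := hf.1 x
      have hfx : f x = none := by rw [← happ x, hgx]; rfl
      rw [hfx] at h2
      simp at h2
    · rfl
  by_cases hplg : ∃ (x : ℕ) (hx : x + 1 < n), g ⟨x, Nat.lt_of_succ_lt hx⟩ = g ⟨x+1, hx⟩
  · left
    refine ⟨htot, fun x hx => ⟨fun he => ?_, fun he => ?_⟩⟩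
    · refine (hf.2 x hx).mp ?_
      rw [← happ, ← happ, he]
    · obtain ⟨z, hz, hgz⟩ := hplg
      have hzq : z = q := (hf.2 z hz).mp (by rw [← happ, ← happ, hgz])
      subst hzq; subst he
      exact hgz
  · right
    push_neg at hplg
    have hgid : g = idPT n := total_inj_eq_id hg htot (inj_of_no_plateau hg htot hplg)
    rw [← hmul, hgid, id_mul]

lemma factor_Ki {i : Fin n} {f g h : PT n} (hf : f ∈ Ki i) (hg : g ∈ OCPs n)
    (hmul : g * h = f) : g ∈ Ki i ∨ h = f := by
  have happ : ∀ x, (g x).bind h = f x := fun x => congrFun hmul x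
  obtain ⟨hfi, hfdom, hfinj⟩ := hf
  have htot' : ∀ j, j ≠ i → (g j).isSome := by
    intro j hj
    rcases hgx : g j with _ | a
    · exfalso
      have h2 := hfdom j hj
      have hfx : f j = none := by rw [← happ j, hgx]; rfl
      rw [hfx] at h2
      simp at h2
    · rfl
  by_cases hgi : (g i).isSome
  · right
    have htot : ∀ x, (g x).isSome := by
      intro x; by_cases hx : x = i
      · rw [hx]; exact hgi
      · exact htot' x hx
    have hinj : ∀ x y a, g x = some a → g y = some a → x = y := by
      intro x y a hx hy
      by_contra hne
      by_cases hxi : x = i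
      · subst hxi
        have hyne : y ≠ x := fun hc => hne hc.symm
        obtain ⟨c, hc⟩ := Option.isSome_iff_exists.mp (hfdom y hyne)
        have h1 := happ x
        have h2 := happ y
        rw [hx] at h1; rw [hy] at h2
        simp only [Option.bind_some] at h1 h2
        rw [hfi] at h1
        rw [hc] at h2
        rw [h1] at h2
        exact absurd h2 (by simp)
      · by_cases hyi : y = i
        · subst hyi
          obtain ⟨c, hc⟩ := Option.isSome_iff_exists.mp (hfdom x hxi)
          have h1 := happ x
          have h2 := happ y
          rw [hx] at h1; rw [hy] at h2
          simp only [Option.bind_some] at h1 h2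
          rw [hfi] at h2
          rw [hc] at h1
          rw [h2] at h1
          exact absurd h1 (by simp)
        · obtain ⟨c, hc⟩ := Option.isSome_iff_exists.mp (hfdom x hxi)
          have h1 := happ x
          have h2 := happ y
          rw [hx] at h1; rw [hy] at h2
          simp only [Option.bind_some] at h1 h2
          rw [hc] at h1
          rw [h1] at h2
          exact hne (hfinj x y c hc h2.symm)
    have hgid : g = idPT n := total_inj_eq_id hg htot hinj
    rw [← hmul, hgid, id_mul]
  · left
    refine ⟨Option.not_isSome_iff_eq_none.mp hgi, htot', ?_⟩
    intro x y a hx hy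
    have hxi : x ≠ i := by
      intro hc; subst hc
      rw [Option.not_isSome_iff_eq_none.mp hgi] at hx
      exact absurd hx (by simp)
    have hyi : y ≠ i := by
      intro hc; subst hc
      rw [Option.not_isSome_iff_eq_none.mp hgi] at hy
      exact absurd hy (by simp)
    obtain ⟨c, hc⟩ := Option.isSome_iff_exists.mp (hfdom x hxi)
    have h1 := happ x
    have h2 := happ y
    rw [hx] at h1; rw [hy] at h2
    simp only [Option.bind_some] at h1 h2
    rw [hc] at h1
    rw [h1] at h2
    exact hfinj x y c hc h2.symm

end C7
section C8
variable {n : ℕ}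

lemma idPT_mem_OCP : idPT n ∈ OCPs n := by
  constructor
  · intro x y a b hx hy hxy
    obtain rfl := Option.some_inj.mp hx
    obtain rfl := Option.some_inj.mp hy
    exact hxy
  · intro x y a b hx hy
    obtain rfl := Option.some_inj.mp hx
    obtain rfl := Option.some_inj.mp hy
    exact le_refl _

lemma pid_mem_Ki (i : Fin n) : pid i ∈ Ki i := by
  refine ⟨by simp [pid], fun j hj => by simp [pid, hj], ?_⟩
  intro x y a hx hy
  simp only [pid] at hx hy
  split_ifs at hx hy
  obtain rfl := Option.some_inj.mp hx
  obtain rfl := Option.some_inj.mp hy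
  rfl

lemma dq_mem_Cq (hn : 3 ≤ n) {q : ℕ} (hq : q ≤ n - 2) : tot n (dfun q) ∈ Cq n q := by
  constructor
  · exact tot_total _ (dfun_lt q)
  · intro x hx
    rw [tot_apply_eq _ _ (dfun_lt q _ (by omega)), tot_apply_eq _ _ (dfun_lt q _ hx)]
    constructor
    · intro he
      have := Option.some_inj.mp he
      rw [Fin.mk.injEq] at this
      simp only [dfun] at this
      split_ifs at this <;> omega
    · intro he
      subst he
      refine congrArg some (Fin.ext ?_)
      simp only [dfun]
      split_ifs <;> omega

lemma class_meets {A : Set (PT n)} (hA : (Subsemigroup.closure A : Set (PT n)) = OCPs n)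
    {C : Set (PT n)}
    (hstep : ∀ f g h : PT n, f ∈ C → g ∈ OCPs n → g * h = f → g ∈ C ∨ h = f)
    {c₀ : PT n} (hc₀C : c₀ ∈ C) (hc₀O : c₀ ∈ OCPs n) : (A ∩ C).Nonempty := by
  have hc₀ : c₀ ∈ Subsemigroup.closure A := by
    have : c₀ ∈ (Subsemigroup.closure A : Set (PT n)) := by rw [hA]; exact hc₀O
    exact this
  refine Subsemigroup.closure_induction
    (p := fun x _ => x ∈ C → (A ∩ C).Nonempty) ?_ ?_ hc₀ hc₀C
  · intro x hx hxC; exact ⟨x, hx, hxC⟩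
  · intro x y hx _hy px py hxy
    have hxO : x ∈ OCPs n := by rw [← hA]; exact hx
    rcases hstep (x * y) x y hxy hxO rfl with h | h
    · exact px h
    · exact py (by rw [h]; exact hxy)

lemma cls_meets (hn : 3 ≤ n) {A : Set (PT n)}
    (hA : (Subsemigroup.closure A : Set (PT n)) = OCPs n) :
    ∀ j, (A ∩ cls n j).Nonempty := by
  rintro (i | q)
  · exact class_meets hA (fun f g h hf hg hm => factor_Ki hf hg hm)
      (pid_mem_Ki i) (pid_mem_OCP i)
  · by_cases hq : q.val = n - 1
    · show (A ∩ (if q.val = n - 1 then {idPT n} else Cq n q.val)).Nonempty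
      rw [if_pos hq]
      refine class_meets hA ?_ rfl idPT_mem_OCP
      intro f g h hf hg hm
      rw [Set.mem_singleton_iff] at hf
      exact Or.inl (factor_id hg (by rw [hm, hf]))
    · show (A ∩ (if q.val = n - 1 then {idPT n} else Cq n q.val)).Nonempty
      rw [if_neg hq]
      exact class_meets hA (fun f g h hf hg hm => factor_Cq hf hg hm)
        (dq_mem_Cq hn (by have := q.isLt; omega))
        (tot_mem_OCP _ (dfun_lt _) (dfun_step _))

lemma Cq_total {q : ℕ} {f : PT n} (hf : f ∈ Cq n q) : ∀ x, (f x).isSome := hf.1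

lemma cls_disjoint (hn : 3 ≤ n) :
    ∀ j j' : Fin n ⊕ Fin n, j ≠ j' → ∀ f, f ∈ cls n j → f ∈ cls n j' → False := by
  have htotal : ∀ (q : Fin n) (f : PT n), f ∈ cls n (Sum.inr q) → ∀ x, (f x).isSome := by
    intro q f hf x
    by_cases hq : q.val = n - 1
    · have : f ∈ (if q.val = n - 1 then {idPT n} else Cq n q.val) := hf
      rw [if_pos hq, Set.mem_singleton_iff] at this
      rw [this]; rfl
    · have : f ∈ (if q.val = n - 1 then {idPT n} else Cq n q.val) := hf
      rw [if_neg hq] at this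
      exact this.1 x
  have hplateau : ∀ (q : Fin n) (f : PT n), f ∈ cls n (Sum.inr q) →
      ∀ (x : ℕ) (hx : x + 1 < n), (f ⟨x, Nat.lt_of_succ_lt hx⟩ = f ⟨x+1, hx⟩ ↔ x = q.val) := by
    intro q f hf x hx
    by_cases hq : q.val = n - 1
    · have hfi : f ∈ (if q.val = n - 1 then {idPT n} else Cq n q.val) := hf
      rw [if_pos hq, Set.mem_singleton_iff] at hfi
      subst hfi
      constructor
      · intro he
        have := Option.some_inj.mp he
        rw [Fin.mk.injEq] at this
        omega
      · intro he; omega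
    · have hfi : f ∈ (if q.val = n - 1 then {idPT n} else Cq n q.val) := hf
      rw [if_neg hq] at hfi
      exact hfi.2 x hx
  rintro (i | q) (i' | q') hne f hf hf'
  · have hii : i ≠ i' := fun h => hne (congrArg Sum.inl h)
    have h1 : f i = none := hf.1
    have h2 := hf'.2.1 i hii
    rw [h1] at h2; simp at h2
  · have h1 : f i = none := hf.1
    have h2 := htotal q' f hf' i
    rw [h1] at h2; simp at h2
  · have h1 : f i' = none := hf'.1
    have h2 := htotal q f hf i'
    rw [h1] at h2; simp at h2
  · have hvne : q.val ≠ q'.val := fun h => hne (congrArg Sum.inr (Fin.ext h))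
    rcases Nat.lt_or_ge q.val q'.val with hlt | hge
    · have hx : q.val + 1 < n := by have := q'.isLt; omega
      have hpl := (hplateau q f hf q.val hx).mpr rfl
      have := (hplateau q' f hf' q.val hx).mp hpl
      omega
    · have hlt : q'.val < q.val := by omega
      have hx : q'.val + 1 < n := by have := q.isLt; omega
      have hpl := (hplateau q' f hf' q'.val hx).mpr rfl
      have := (hplateau q f hf q'.val hx).mp hpl
      omega

lemma rank_lower (hn : 3 ≤ n) {A : Set (PT n)}
    (hA : (Subsemigroup.closure A : Set (PT n)) = OCPs n) : 2 * n ≤ A.ncard := by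
  choose w hw using cls_meets hn hA
  have hinj : Function.Injective w := by
    intro j j' h
    by_contra hne
    exact cls_disjoint hn j j' hne (w j) (hw j).2 (h ▸ (hw j').2)
  have hsub : Set.range w ⊆ A := by rintro _ ⟨j, rfl⟩; exact (hw j).1
  have h1 : (Set.range w).ncard = 2 * n := by
    rw [← Set.image_univ, Set.ncard_image_of_injective _ hinj, Set.ncard_univ, Nat.card_sum]
    simp [Nat.card_eq_fintype_card]
    omega
  calc 2 * n = (Set.range w).ncard := h1.symm
    _ ≤ A.ncard := Set.ncard_le_ncard hsub (Set.toFinite A)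

end C8

/-- for `n ≥ 3`, the rank of `OCP_n` is exactly `2n`: `2n` is the least
cardinality of a generating set. -/
theorem stmt_13 {n : ℕ} (hn : 3 ≤ n) :
    IsLeast {k : ℕ | ∃ A : Set (PT n), A.ncard = k ∧
      (Subsemigroup.closure A : Set (PT n)) = {f : PT n | IsOP f ∧ IsContraction f}}
      (2 * n) := by
  constructor
  · exact ⟨genA n, ncard_genA hn, closure_genA hn⟩
  · rintro k ⟨A, hAk, hclos⟩
    rw [← hAk]
    exact rank_lower hn hclos
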